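/- Let f(x) ∈ ℤ[x] be a polynomial of degree d ≥ 2 that is indecomposable in ℚ[x]. Then there exists a constant γ_d > 0 depending only on d such that for every prime number p with p > γ_d · ‖f‖_∞^d, the reduction of f modulo p is indecomposable in F̄_p[x] (the polynomial ring over an algebraic closure of the field with p elements). -/

import Mathlib

open Polynomial

/-- A one-variable polynomial over a field is indecomposable if it is non-constant and
cannot be written as `u ∘ g` with both `u` and `g` of degree at least 2. -/
def IndecomposablePoly {K : Type*} [Field K] (f : K[X]) : Prop :=
  0 < f.natDegree ∧
    ¬ ∃ u g : K[X], 2 ≤ u.natDegree ∧ 2 ≤ g.natDegree ∧ f = u.comp g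

/-- The sup-norm `‖f‖_∞` of an integer polynomial: the maximum of the absolute values of its
coefficients. -/
def intMaxNorm (f : Polynomial ℤ) : ℕ :=
  f.support.sup fun i => (f.coeff i).natAbs

open Finset AddSubgroup

namespace RedIndec

lemma coeff_comp_C_mul_X {R : Type*} [CommSemiring R] (P : R[X]) (c : R) (i : ℕ) :
    (P.comp (C c * X)).coeff i = P.coeff i * c ^ i := by
  induction P using Polynomial.induction_on' with
  | add p q hp hq => simp [add_comp, hp, hq, add_mul]
  | monomial n t =>
    rw [monomial_comp, mul_pow, ← C_pow, ← mul_assoc, ← C_mul, coeff_C_mul, coeff_X_pow,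
      coeff_monomial]
    by_cases h : n = i
    · subst h; simp
    · simp [h, Ne.symm h]

lemma coeff_comp_top {R : Type*} [CommRing R] {g : R[X]} {b : ℕ} (hg : g.Monic)
    (hgb : g.natDegree = b) (hb : 1 ≤ b) (u : R[X]) {n : ℕ} (hu : u.natDegree ≤ n) :
    (u.comp g).coeff (n * b) = u.coeff n := by
  conv_lhs => rw [u.as_sum_range' (n + 1) (by omega)]
  rw [Polynomial.sum_comp, finset_sum_coeff]
  rw [Finset.sum_eq_single n]
  · rw [monomial_comp, coeff_C_mul]
    have h1 : (g ^ n).natDegree = n * b := by rw [hg.natDegree_pow, hgb]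
    have : (g ^ n).coeff (n * b) = 1 := by
      have := (hg.pow n).coeff_natDegree
      rwa [h1] at this
    rw [this, mul_one]
  · intro i hi hne
    rw [monomial_comp]
    apply coeff_eq_zero_of_natDegree_lt
    have h2 : (C (u.coeff i) * g ^ i).natDegree ≤ i * b := by
      refine le_trans (natDegree_C_mul_le _ _) ?_
      refine le_trans natDegree_pow_le ?_
      rw [hgb]
    have : i < n := by
      have := mem_range.mp hi
      omega
    calc (C (u.coeff i) * g ^ i).natDegree ≤ i * b := h2
      _ < n * b := by
        have : i + 1 ≤ n := this
        calc i * b < i * b + b := by omega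
          _ = (i+1) * b := by ring
          _ ≤ n * b := Nat.mul_le_mul_right _ this
  · intro h
    exact absurd (self_mem_range_succ n) h

noncomputable def Frec {R : Type*} [CommRing R] (a b : ℕ) (g f : R[X]) : ℕ → R[X]
  | 0 => f
  | (k+1) => Frec a b g f k - C ((Frec a b g f k).coeff ((a - k) * b)) * g ^ (a - k)

lemma Frec_natDegree_le {R : Type*} [CommRing R] (a b : ℕ) (g f : R[X])
    (hf : f.natDegree ≤ a * b) (hg : g.natDegree ≤ b) :
    ∀ k, (Frec a b g f k).natDegree ≤ a * b := by
  intro k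
  induction k with
  | zero => exact hf
  | succ k ih =>
    rw [Frec]
    refine le_trans (natDegree_sub_le _ _) (max_le ih ?_)
    refine le_trans (natDegree_C_mul_le _ _) ?_
    refine le_trans natDegree_pow_le ?_
    calc (a - k) * g.natDegree ≤ (a - k) * b := Nat.mul_le_mul_left _ hg
      _ ≤ a * b := Nat.mul_le_mul_right _ (by omega)

lemma Frec_coeff_node {R : Type*} [CommRing R] {a b : ℕ} {g f : R[X]} (hg : g.Monic)
    (hgb : g.natDegree = b) (k : ℕ) :
    (Frec a b g f (k+1)).coeff ((a - k) * b) = 0 := by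
  rw [Frec, coeff_sub, coeff_C_mul]
  have h1 : (g ^ (a - k)).natDegree = (a - k) * b := by rw [hg.natDegree_pow, hgb]
  have h2 : (g ^ (a - k)).coeff ((a - k) * b) = 1 := by
    have := (hg.pow (a - k)).coeff_natDegree
    rwa [h1] at this
  rw [h2, mul_one, sub_self]

lemma Frec_eq {R : Type*} [CommRing R] (a b : ℕ) (g f : R[X]) (k : ℕ) :
    Frec a b g f k =
      f - ∑ l ∈ range k, C ((Frec a b g f l).coeff ((a - l) * b)) * g ^ (a - l) := by
  induction k with
  | zero => simp [Frec]
  | succ k ih => rw [Frec, sum_range_succ, ih]; ring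

/-- if `f = u.comp g` with `u` of degree at most `a`, the recursion terminates at `0`. -/
lemma Frec_comp_eq_zero {R : Type*} [CommRing R] {a b : ℕ} {g f u : R[X]} (hg : g.Monic)
    (hgb : g.natDegree = b) (hb : 1 ≤ b) (hu : u.natDegree ≤ a) (hf : f = u.comp g) :
    Frec a b g f (a + 1) = 0 := by
  set v : ℕ → R[X] := fun k => ∑ i ∈ range (a + 1 - k), C (u.coeff i) * X ^ i with hv
  have key : ∀ k, k ≤ a + 1 → Frec a b g f k = (v k).comp g := by
    intro k
    induction k with
    | zero =>
      intro _
      have : v 0 = u := by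
        simp only [hv, Nat.sub_zero]
        conv_rhs => rw [u.as_sum_range' (a+1) (by omega)]
        refine Finset.sum_congr rfl fun i _ => ?_
        rw [C_mul_X_pow_eq_monomial]
      rw [this, ← hf, Frec]
    | succ k ih =>
      intro hk
      have hka : k ≤ a := by omega
      have ihh := ih (by omega)
      have hvdeg : (v k).natDegree ≤ a - k := by
        refine natDegree_sum_le_of_forall_le _ _ fun i hi => ?_
        refine le_trans (natDegree_C_mul_X_pow_le _ _) ?_
        have : i < a + 1 - k := mem_range.mp hi
        omega
      have hco : ((v k).comp g).coeff ((a - k) * b) = (v k).coeff (a - k) :=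
        coeff_comp_top hg hgb hb _ hvdeg
      have hvk : (v k).coeff (a - k) = u.coeff (a - k) := by
        simp only [hv]
        rw [finset_sum_coeff, Finset.sum_eq_single (a - k)]
        · rw [coeff_C_mul, coeff_X_pow, if_pos rfl, mul_one]
        · intro i hi hne
          simp only [coeff_C_mul, coeff_X_pow]
          split_ifs with h
          · omega
          · rw [mul_zero]
        · intro h
          exact absurd (mem_range.mpr (by omega)) h
      rw [Frec, ihh, hco, hvk]
      have h2 : a + 1 - (k+1) = a - k := by omega
      have hsplit : v k = v (k+1) + C (u.coeff (a - k)) * X ^ (a - k) := by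
        simp only [hv, h2]
        have h1 : a + 1 - k = (a - k) + 1 := by omega
        rw [h1, sum_range_succ]
      rw [hsplit, add_comp, mul_comp, C_comp, pow_comp, X_comp]
      ring
  have := key (a + 1) le_rfl
  rw [this]
  have : v (a + 1) = 0 := by
    simp [hv]
  rw [this, zero_comp]

/-- conversely, if the recursion terminates at `0`, `f` decomposes through `g`. -/
lemma Frec_decomp {R : Type*} [CommRing R] {a b : ℕ} {g f : R[X]} (hg : g.Monic)
    (hgb : g.natDegree = b) (ha : 1 ≤ a) (hL : f.coeff (a * b) ≠ 0)
    (h0 : Frec a b g f (a + 1) = 0) :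
    ∃ u : R[X], u.natDegree = a ∧ f = u.comp g := by
  have htel := Frec_eq a b g f (a + 1)
  rw [h0] at htel
  have hf : f = ∑ l ∈ range (a + 1), C ((Frec a b g f l).coeff ((a - l) * b)) * g ^ (a - l) :=
    sub_eq_zero.mp htel.symm
  set e : ℕ → R := fun l => (Frec a b g f l).coeff ((a - l) * b) with he
  refine ⟨∑ l ∈ range (a + 1), C (e l) * X ^ (a - l), ?_, ?_⟩
  · have hle : (∑ l ∈ range (a + 1), C (e l) * X ^ (a - l)).natDegree ≤ a := by
      refine natDegree_sum_le_of_forall_le _ _ fun i _ => ?_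
      refine le_trans (natDegree_C_mul_X_pow_le _ _) ?_
      omega
    have hcoeff : (∑ l ∈ range (a + 1), C (e l) * X ^ (a - l)).coeff a = e 0 := by
      rw [finset_sum_coeff, Finset.sum_eq_single 0]
      · rw [coeff_C_mul, coeff_X_pow, if_pos (by omega), mul_one]
      · intro i hi hne
        simp only [coeff_C_mul, coeff_X_pow]
        split_ifs with h
        · exfalso; have := mem_range.mp hi; omega
        · rw [mul_zero]
      · intro h; exact absurd (mem_range.mpr (by omega)) h
    have he0 : e 0 = f.coeff (a * b) := by rw [he]; simp [Frec]
    refine le_antisymm hle (le_natDegree_of_ne_zero ?_)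
    rw [hcoeff, he0]; exact hL
  · rw [Polynomial.sum_comp]
    conv_lhs => rw [hf]
    refine Finset.sum_congr rfl fun l _ => ?_
    rw [mul_comp, C_comp, pow_comp, X_comp]


lemma approx_unique {K : Type*} [Field K] {a b : ℕ} (ha : 1 ≤ a) {L : K} (hL : L ≠ 0)
    (haK : (a : K) ≠ 0) {g g' : K[X]} (hg : g.Monic) (hgd : g.natDegree = b)
    (hg' : g'.Monic) (hgd' : g'.natDegree = b)
    (hmatch : ∀ i, a * b - b < i → (C L * g ^ a).coeff i = (C L * g' ^ a).coeff i) :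
    ∃ e : K, g' = g + C e := by
  by_cases hgg : g' = g
  · exact ⟨0, by simp [hgg]⟩
  have hsub : g - g' ≠ 0 := fun h => hgg (sub_eq_zero.mp h).symm
  set S : K[X] := ∑ i ∈ range a, g ^ i * g' ^ (a - 1 - i) with hS
  have hgeom : S * (g - g') = g ^ a - g' ^ a := geom_sum₂_mul g g' a
  have hterm : ∀ i ∈ range a, (g ^ i * g' ^ (a - 1 - i)).Monic ∧
      (g ^ i * g' ^ (a - 1 - i)).natDegree = (a - 1) * b := by
    intro i hi
    have hmono : (g ^ i * g' ^ (a - 1 - i)).Monic := (hg.pow i).mul (hg'.pow _)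
    refine ⟨hmono, ?_⟩
    rw [(hg.pow i).natDegree_mul (hg'.pow _), hg.natDegree_pow, hg'.natDegree_pow, hgd, hgd']
    have hia : i ≤ a - 1 := by have := mem_range.mp hi; omega
    have : i + (a - 1 - i) = a - 1 := by omega
    rw [← add_mul, this]
  have hScoeff : S.coeff ((a - 1) * b) = (a : K) := by
    rw [hS, finset_sum_coeff]
    have h1 : ∀ i ∈ range a, (g ^ i * g' ^ (a - 1 - i)).coeff ((a - 1) * b) = 1 := by
      intro i hi
      obtain ⟨hmono, hdeg⟩ := hterm i hi
      have := hmono.coeff_natDegree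
      rwa [hdeg] at this
    rw [Finset.sum_congr rfl h1, Finset.sum_const, card_range, nsmul_eq_mul, mul_one]
  have hS0 : S ≠ 0 := fun h => haK (by rw [← hScoeff, h, coeff_zero])
  have hSdeg : S.natDegree = (a - 1) * b := by
    refine le_antisymm ?_ (le_natDegree_of_ne_zero (by rw [hScoeff]; exact haK))
    rw [hS]
    exact natDegree_sum_le_of_forall_le _ _ fun i hi => le_of_eq (hterm i hi).2
  have hdiff_le : (g ^ a - g' ^ a).natDegree ≤ a * b - b := by
    rw [natDegree_le_iff_coeff_eq_zero]
    intro N hN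
    have h2 : (g ^ a).coeff N = (g' ^ a).coeff N := by
      have := hmatch N hN
      rw [coeff_C_mul, coeff_C_mul] at this
      exact mul_left_cancel₀ hL this
    rw [coeff_sub, h2, sub_self]
  rw [← hgeom, natDegree_mul hS0 hsub, hSdeg] at hdiff_le
  have hab : a * b - b = (a - 1) * b := (Nat.sub_one_mul a b).symm
  rw [hab] at hdiff_le
  have hd0 : (g - g').natDegree = 0 := by omega
  have hC := eq_C_of_natDegree_le_zero (le_of_eq hd0)
  refine ⟨-((g - g').coeff 0), ?_⟩
  rw [map_neg]
  have : g - g' = C ((g - g').coeff 0) := hC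
  have hgoal : g + -C ((g - g').coeff 0) - g' = 0 := by
    rw [show g + -C ((g - g').coeff 0) - g' = (g - g') - C ((g - g').coeff 0) by ring]
    rw [← this, sub_self]
  exact (sub_eq_zero.mp hgoal).symm

lemma Frec_scale {K : Type*} [CommRing K] (a b : ℕ) (φ : ℤ →+* K) (c : K)
    (G F0 : ℤ[X]) (gK fK : K[X])
    (hg : (G.map φ).comp (C c * X) = C (c ^ b) * gK)
    (hf : (F0.map φ).comp (C c * X) = C (c ^ (a * b)) * fK) :
    ∀ k, ((Frec a b G F0 k).map φ).comp (C c * X) = C (c ^ (a * b)) * Frec a b gK fK k := by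
  intro k
  induction k with
  | zero => exact hf
  | succ k ih =>
    have hcm := congrArg (fun P : K[X] => P.coeff ((a - k) * b)) ih
    simp only [coeff_comp_C_mul_X, coeff_map, coeff_C_mul] at hcm
    rw [Frec, Frec, Polynomial.map_sub, sub_comp, ih, Polynomial.map_mul, Polynomial.map_pow,
      mul_comp, pow_comp, hg, map_C, C_comp]
    rw [mul_pow, ← C_pow, ← pow_mul, mul_sub]
    congr 1
    rw [← mul_assoc, ← mul_assoc, ← C_mul, ← C_mul]
    congr 2
    rw [show b * (a - k) = (a - k) * b from Nat.mul_comm _ _]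
    exact hcm

lemma scaleRoots_comp_rel {K : Type*} [CommRing K] (φ : ℤ →+* K) (s : ℤ) (f : ℤ[X]) (d : ℕ)
    (hd : f.natDegree = d) :
    ((f.scaleRoots s).map φ).comp (C (φ s) * X) = C ((φ s) ^ d) * (f.map φ) := by
  ext i
  rw [coeff_comp_C_mul_X, coeff_map, coeff_scaleRoots, coeff_C_mul, coeff_map, hd]
  by_cases h : i ≤ d
  · rw [map_mul, map_pow, mul_assoc, ← pow_add]
    have : d - i + i = d := by omega
    rw [this]
    ring
  · have h0 : f.coeff i = 0 := coeff_eq_zero_of_natDegree_lt (by omega)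
    simp [h0]

lemma zmul_iff {c x : ℚ} : x ∈ AddSubgroup.zmultiples c ↔ ∃ z : ℤ, x = (z : ℚ) * c := by
  rw [AddSubgroup.mem_zmultiples_iff]
  constructor
  · rintro ⟨k, hk⟩; exact ⟨k, by rw [← hk, zsmul_eq_mul]⟩
  · rintro ⟨z, hz⟩; exact ⟨z, by rw [hz, zsmul_eq_mul]⟩

lemma zmul_mul {c c' x y : ℚ} (hx : x ∈ AddSubgroup.zmultiples c)
    (hy : y ∈ AddSubgroup.zmultiples c') : x * y ∈ AddSubgroup.zmultiples (c * c') := by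
  obtain ⟨z, hz⟩ := zmul_iff.mp hx
  obtain ⟨w, hw⟩ := zmul_iff.mp hy
  refine zmul_iff.mpr ⟨z * w, ?_⟩
  rw [hz, hw]
  push_cast
  ring

lemma zmul_int_mul {c x : ℚ} (z : ℤ) (hx : x ∈ AddSubgroup.zmultiples c) :
    (z : ℚ) * x ∈ AddSubgroup.zmultiples c := by
  obtain ⟨w, hw⟩ := zmul_iff.mp hx
  exact zmul_iff.mpr ⟨z * w, by rw [hw]; push_cast; ring⟩

lemma zmul_pow_le {a : ℕ} {k m : ℕ} (hmk : m ≤ k) {x : ℚ}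
    (hx : x ∈ AddSubgroup.zmultiples ((a : ℚ) ^ k)) :
    x ∈ AddSubgroup.zmultiples ((a : ℚ) ^ m) := by
  obtain ⟨z, hz⟩ := zmul_iff.mp hx
  refine zmul_iff.mpr ⟨z * (a : ℤ) ^ (k - m), ?_⟩
  rw [hz]
  have : (a : ℚ) ^ k = (a : ℚ) ^ (k - m) * (a : ℚ) ^ m := by
    rw [← pow_add]
    congr 1
    omega
  rw [this]
  push_cast
  ring


lemma tpow_den (a b : ℕ) (sQ : ℚ) (t : ℚ[X]) (htd : t.natDegree ≤ b)
    (hden : ∀ w, w ≤ b → t.coeff (b - w) * sQ ^ w ∈ AddSubgroup.zmultiples ((a : ℚ))) :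
    ∀ k, ∀ w ≤ k * b, (t ^ k).coeff (k * b - w) * sQ ^ w ∈
      AddSubgroup.zmultiples ((a : ℚ) ^ k) := by
  intro k
  induction k with
  | zero =>
    intro w hw
    have hw0 : w = 0 := by omega
    subst hw0
    refine zmul_iff.mpr ⟨1, by simp⟩
  | succ k ih =>
    intro w hw
    have hkb : (k + 1) * b = k * b + b := by ring
    rw [show ((a:ℚ))^(k+1) = (a:ℚ) * (a:ℚ)^k from pow_succ' _ _]
    rw [pow_succ' t k, coeff_mul, Finset.sum_mul]
    refine AddSubgroup.sum_mem _ ?_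
    intro x hx
    have hxsum : x.1 + x.2 = (k + 1) * b - w := Finset.HasAntidiagonal.mem_antidiagonal.mp hx
    by_cases h1 : x.1 ≤ b
    · by_cases h2 : x.2 ≤ k * b
      · set w1 := b - x.1 with hw1def
        set w2 := k * b - x.2 with hw2def
        have hw1 : w1 ≤ b := by omega
        have hw2 : w2 ≤ k * b := by omega
        have hww : w1 + w2 = w := by omega
        have hc1 : t.coeff x.1 * sQ ^ w1 ∈ AddSubgroup.zmultiples ((a : ℚ)) := by
          have hx1 : x.1 = b - w1 := by omega
          rw [hx1]; exact hden w1 hw1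
        have hc2 : (t ^ k).coeff x.2 * sQ ^ w2 ∈ AddSubgroup.zmultiples ((a : ℚ) ^ k) := by
          have hx2 : x.2 = k * b - w2 := by omega
          rw [hx2]; exact ih w2 hw2
        have hmm := zmul_mul hc1 hc2
        have harr : t.coeff x.1 * (t ^ k).coeff x.2 * sQ ^ w =
            t.coeff x.1 * sQ ^ w1 * ((t ^ k).coeff x.2 * sQ ^ w2) := by
          rw [← hww, pow_add]; ring
        rw [harr]
        exact hmm
      · have h0 : (t ^ k).coeff x.2 = 0 := by
          apply coeff_eq_zero_of_natDegree_lt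
          have : (t ^ k).natDegree ≤ k * b :=
            le_trans natDegree_pow_le (Nat.mul_le_mul_left k htd)
          omega
        rw [h0, mul_zero, zero_mul]
        exact zero_mem _
    · have h0 : t.coeff x.1 = 0 := coeff_eq_zero_of_natDegree_lt (by omega)
      rw [h0, zero_mul, zero_mul]
      exact zero_mem _

lemma tpow_size (a b : ℕ) (ρ : ℚ) (hρ : 1 ≤ ρ) (B : ℚ) (hB : 0 ≤ B) (t : ℚ[X])
    (htd : t.natDegree ≤ b)
    (hsz : ∀ w ≤ b, |t.coeff (b - w)| ≤ B * ρ ^ w) :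
    ∀ k, k ≤ a → ∀ w ≤ k * b,
      |(t ^ k).coeff (k * b - w)| ≤ ((a * b + 1 : ℚ) * B) ^ k * ρ ^ w := by
  intro k
  induction k with
  | zero =>
    intro _ w hw
    have hw0 : w = 0 := by omega
    subst hw0
    simp
  | succ k ih =>
    intro hka w hw
    have hkb : (k + 1) * b = k * b + b := by ring
    have hρ0 : (0:ℚ) < ρ := by linarith
    have hBk : (0:ℚ) ≤ ((a * b + 1 : ℚ) * B) ^ k := by positivity
    rw [pow_succ' t k, coeff_mul]
    refine le_trans (Finset.abs_sum_le_sum_abs _ _) ?_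
    have hcard : (Finset.HasAntidiagonal.antidiagonal ((k + 1) * b - w)).card = (k + 1) * b - w + 1 :=
      Finset.Nat.card_antidiagonal _
    have hbound : ∀ x ∈ Finset.HasAntidiagonal.antidiagonal ((k + 1) * b - w),
        |t.coeff x.1 * (t ^ k).coeff x.2| ≤ B * ((a * b + 1 : ℚ) * B) ^ k * ρ ^ w := by
      intro x hx
      have hxsum : x.1 + x.2 = (k + 1) * b - w := Finset.HasAntidiagonal.mem_antidiagonal.mp hx
      by_cases h1 : x.1 ≤ b
      · by_cases h2 : x.2 ≤ k * b
        · set w1 := b - x.1 with hw1def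
          set w2 := k * b - x.2 with hw2def
          have hw1 : w1 ≤ b := by omega
          have hw2 : w2 ≤ k * b := by omega
          have hww : w1 + w2 = w := by omega
          have hc1 : |t.coeff x.1| ≤ B * ρ ^ w1 := by
            have hx1 : x.1 = b - w1 := by omega
            rw [hx1]; exact hsz w1 hw1
          have hc2 : |(t ^ k).coeff x.2| ≤ ((a * b + 1 : ℚ) * B) ^ k * ρ ^ w2 := by
            have hx2 : x.2 = k * b - w2 := by omega
            rw [hx2]; exact ih (by omega) w2 hw2
          rw [abs_mul]
          calc |t.coeff x.1| * |(t ^ k).coeff x.2|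
              ≤ (B * ρ ^ w1) * (((a * b + 1 : ℚ) * B) ^ k * ρ ^ w2) := by
                exact mul_le_mul hc1 hc2 (abs_nonneg _) (by positivity)
            _ = B * ((a * b + 1 : ℚ) * B) ^ k * ρ ^ w := by
                rw [← hww, pow_add]; ring
        · have h0 : (t ^ k).coeff x.2 = 0 := by
            apply coeff_eq_zero_of_natDegree_lt
            have : (t ^ k).natDegree ≤ k * b :=
              le_trans natDegree_pow_le (Nat.mul_le_mul_left k htd)
            omega
          rw [h0, mul_zero, abs_zero]
          positivity
      · have h0 : t.coeff x.1 = 0 := coeff_eq_zero_of_natDegree_lt (by omega)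
        rw [h0, zero_mul, abs_zero]
        positivity
    refine le_trans (Finset.sum_le_card_nsmul _ _ _ hbound) ?_
    rw [hcard, nsmul_eq_mul]
    have hc2 : (((k + 1) * b - w + 1 : ℕ) : ℚ) ≤ (a * b + 1 : ℚ) := by
      have h1 : (k + 1) * b - w + 1 ≤ a * b + 1 := by
        have : (k + 1) * b ≤ a * b := Nat.mul_le_mul_right b hka
        omega
      calc (((k + 1) * b - w + 1 : ℕ) : ℚ) ≤ ((a * b + 1 : ℕ) : ℚ) := Nat.cast_le.mpr h1
        _ = (a * b + 1 : ℚ) := by push_cast; ring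
    calc (((k + 1) * b - w + 1 : ℕ) : ℚ) * (B * ((a * b + 1 : ℚ) * B) ^ k * ρ ^ w)
        ≤ (a * b + 1 : ℚ) * (B * ((a * b + 1 : ℚ) * B) ^ k * ρ ^ w) :=
          mul_le_mul_of_nonneg_right hc2 (by positivity)
      _ = ((a * b + 1 : ℚ) * B) ^ (k + 1) * ρ ^ w := by rw [pow_succ]; ring


lemma tail_natDegree_le (b : ℕ) (g : ℚ[X]) (hgd : g.natDegree = b) :
    (g - X ^ b).natDegree ≤ b := by
  rw [natDegree_le_iff_coeff_eq_zero]
  intro N hN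
  rw [coeff_sub, coeff_X_pow, if_neg (by omega), coeff_eq_zero_of_natDegree_lt (by omega),
    sub_zero]

lemma binom_term_rearr (m k c b : ℕ) (t : ℚ[X]) :
    ((X : ℚ[X]) ^ b) ^ m * t ^ k * (c : ℚ[X]) = (C ((c : ℚ)) * t ^ k) * X ^ (m * b) := by
  rw [← pow_mul, Nat.mul_comm b m, ← C_eq_natCast]
  ring

lemma gpow_den (a b : ℕ) (ha : 2 ≤ a) (hb : 1 ≤ b) (sQ : ℚ) (g : ℚ[X])
    (hgd : g.natDegree = b)
    (hden : ∀ w, w ≤ b → (g - X ^ b).coeff (b - w) * sQ ^ w ∈ AddSubgroup.zmultiples ((a : ℚ))) :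
    ∀ w, 1 ≤ w → w ≤ b →
      (g ^ a).coeff (a * b - w) * sQ ^ w ∈ AddSubgroup.zmultiples ((a : ℚ) ^ 2) := by
  intro w hw1 hwb
  have htd : (g - X ^ b).natDegree ≤ b := tail_natDegree_le b g hgd
  have hbab : b ≤ a * b := Nat.le_mul_of_pos_left b (by omega)
  have hgt : g = X ^ b + (g - X ^ b) := by ring
  have hga : (g : ℚ[X]) ^ a = (X ^ b + (g - X ^ b)) ^ a := by rw [← hgt]
  rw [hga, add_pow, finset_sum_coeff, Finset.sum_mul]
  refine AddSubgroup.sum_mem _ ?_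
  intro m hm
  have hma : m ≤ a := by have := mem_range.mp hm; omega
  rw [binom_term_rearr, coeff_mul_X_pow']
  by_cases hcase : m * b ≤ a * b - w
  · rw [if_pos hcase]
    have hmb : m * b < a * b := by omega
    have hmlt : m < a := by
      by_contra hcon
      have : a * b ≤ m * b := Nat.mul_le_mul_right b (by omega)
      omega
    have hjb : (a - m) * b = a * b - m * b := Nat.sub_mul a m b
    have hj1 : 1 ≤ a - m := by omega
    have hidx : a * b - w - m * b = (a - m) * b - w := by omega
    have hwj : w ≤ (a - m) * b := by omega
    rw [hidx, coeff_C_mul]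
    have hmem := tpow_den a b sQ (g - X ^ b) htd hden (a - m) w hwj
    have harr : (a.choose m : ℚ) * ((g - X ^ b) ^ (a - m)).coeff ((a - m) * b - w) * sQ ^ w =
        (a.choose m : ℚ) * (((g - X ^ b) ^ (a - m)).coeff ((a - m) * b - w) * sQ ^ w) := by
      ring
    rw [harr]
    by_cases hj2 : 2 ≤ a - m
    · have h1 := zmul_pow_le hj2 hmem
      have : ((a.choose m : ℤ) : ℚ) = (a.choose m : ℚ) := by push_cast; ring
      rw [← this]
      exact zmul_int_mul _ h1
    · have hjm : a - m = 1 := by omega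
      rw [hjm] at hmem
      rw [pow_one] at hmem
      obtain ⟨z, hz⟩ := zmul_iff.mp hmem
      refine zmul_iff.mpr ⟨z, ?_⟩
      have hch : a.choose m = a := by
        have hmeq : m = a - 1 := by omega
        rw [hmeq, Nat.choose_symm (by omega : 1 ≤ a), Nat.choose_one_right]
      rw [hch, hjm, hz]
      ring
  · rw [if_neg hcase, zero_mul]
    exact zero_mem _

lemma gpow_size (a b : ℕ) (hb : 1 ≤ b) (ρ B : ℚ) (hρ : 1 ≤ ρ) (hB : 0 ≤ B) (g : ℚ[X])
    (hgd : g.natDegree = b)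
    (hsz : ∀ w ≤ b, |(g - X ^ b).coeff (b - w)| ≤ B * ρ ^ w) :
    ∀ j, j ≤ a → ∀ w ≤ j * b,
      |(g ^ j).coeff (j * b - w)| ≤
        (2 : ℚ) ^ a * ((a * b + 1 : ℚ) * B + 1) ^ a * ρ ^ w := by
  intro j hja w hw
  have htd : (g - X ^ b).natDegree ≤ b := tail_natDegree_le b g hgd
  have hρ0 : (0:ℚ) < ρ := by linarith
  have hgt : g = X ^ b + (g - X ^ b) := by ring
  have hga : (g : ℚ[X]) ^ j = (X ^ b + (g - X ^ b)) ^ j := by rw [← hgt]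
  rw [hga, add_pow, finset_sum_coeff]
  refine le_trans (Finset.abs_sum_le_sum_abs _ _) ?_
  have hterm : ∀ m ∈ range (j + 1),
      |(((X : ℚ[X]) ^ b) ^ m * (g - X ^ b) ^ (j - m) * (j.choose m : ℚ[X])).coeff (j * b - w)|
        ≤ (j.choose m : ℚ) * (((a * b + 1 : ℚ) * B + 1) ^ a * ρ ^ w) := by
    intro m hm
    have hmj : m ≤ j := by have := mem_range.mp hm; omega
    rw [binom_term_rearr, coeff_mul_X_pow']
    by_cases hcase : m * b ≤ j * b - w
    · rw [if_pos hcase]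
      have hjb : (j - m) * b = j * b - m * b := Nat.sub_mul j m b
      have hmb : m * b ≤ j * b := Nat.mul_le_mul_right b hmj
      have hidx : j * b - w - m * b = (j - m) * b - w := by omega
      have hwj : w ≤ (j - m) * b := by omega
      rw [hidx, coeff_C_mul, abs_mul]
      have habs : |(j.choose m : ℚ)| = (j.choose m : ℚ) := abs_of_nonneg (by positivity)
      rw [habs]
      refine mul_le_mul_of_nonneg_left ?_ (by positivity)
      have h1 := tpow_size a b ρ hρ B hB (g - X ^ b) htd hsz (j - m) (by omega) w hwj
      refine le_trans h1 ?_
      refine mul_le_mul_of_nonneg_right ?_ (by positivity)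
      calc ((a * b + 1 : ℚ) * B) ^ (j - m) ≤ ((a * b + 1 : ℚ) * B + 1) ^ (j - m) := by
            refine pow_le_pow_left₀ ?_ (by linarith) _
            positivity
        _ ≤ ((a * b + 1 : ℚ) * B + 1) ^ a := by
            refine pow_le_pow_right₀ ?_ (by omega)
            have : (0:ℚ) ≤ (a * b + 1 : ℚ) * B := by positivity
            linarith
    · rw [if_neg hcase, abs_zero]
      positivity
  refine le_trans (Finset.sum_le_sum hterm) ?_
  rw [← Finset.sum_mul]
  have hsum : (∑ m ∈ range (j + 1), (j.choose m : ℚ)) = (2 : ℚ) ^ j := by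
    have := Nat.sum_range_choose j
    calc (∑ m ∈ range (j + 1), (j.choose m : ℚ)) = ((∑ m ∈ range (j + 1), j.choose m : ℕ) : ℚ) := by
          push_cast; ring
      _ = ((2 ^ j : ℕ) : ℚ) := by rw [this]
      _ = (2 : ℚ) ^ j := by push_cast; ring
  rw [hsum]
  have h2j : (2 : ℚ) ^ j ≤ (2 : ℚ) ^ a := pow_le_pow_right₀ (by norm_num) hja
  calc (2 : ℚ) ^ j * (((a * b + 1 : ℚ) * B + 1) ^ a * ρ ^ w)
      ≤ (2 : ℚ) ^ a * (((a * b + 1 : ℚ) * B + 1) ^ a * ρ ^ w) :=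
        mul_le_mul_of_nonneg_right h2j (by positivity)
    _ = (2 : ℚ) ^ a * ((a * b + 1 : ℚ) * B + 1) ^ a * ρ ^ w := by ring


/-- Norm facts -/
lemma coeff_le_intMaxNorm (f : ℤ[X]) (i : ℕ) :
    |((f.coeff i : ℤ) : ℚ)| ≤ (intMaxNorm f : ℚ) := by
  by_cases h : f.coeff i = 0
  · rw [h]; simp
  · have hmem : i ∈ f.support := by
      rw [Polynomial.mem_support_iff]; exact h
    have hle : (f.coeff i).natAbs ≤ intMaxNorm f := Finset.le_sup (f := fun i => (f.coeff i).natAbs) hmem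
    calc |((f.coeff i : ℤ) : ℚ)| = (((f.coeff i).natAbs : ℕ) : ℚ) := by
          rw [Nat.cast_natAbs]; push_cast; ring
      _ ≤ (intMaxNorm f : ℚ) := Nat.cast_le.mpr hle

/-- The approximate `a`-th root construction over `ℚ`, with denominator and size control. -/
lemma construct (a b : ℕ) (ha : 2 ≤ a) (hb : 2 ≤ b) :
    ∃ Cg : ℚ, 1 ≤ Cg ∧ ∀ f : ℤ[X], f.natDegree = a * b → f.coeff (a * b) ≠ 0 →
      ∃ g : ℚ[X], g.Monic ∧ g.natDegree = b ∧
        (∀ w, 1 ≤ w → w ≤ b →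
          (C ((f.coeff (a * b) : ℚ)) * g ^ a).coeff (a * b - w)
            = (f.map (Int.castRingHom ℚ)).coeff (a * b - w)) ∧
        (∀ w, w ≤ b →
          (g - X ^ b).coeff (b - w) * (((a : ℚ)) ^ 2 * (f.coeff (a * b) : ℚ)) ^ w
            ∈ AddSubgroup.zmultiples ((a : ℚ))) ∧
        (∀ w, w ≤ b →
          |(g - X ^ b).coeff (b - w)| ≤
            Cg * ((intMaxNorm f : ℚ) / |(f.coeff (a * b) : ℚ)|) ^ w) := by
  suffices H : ∀ j : ℕ, ∃ Cg : ℚ, 1 ≤ Cg ∧ ∀ f : ℤ[X], f.natDegree = a * b →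
      f.coeff (a * b) ≠ 0 →
      ∃ g : ℚ[X], g.Monic ∧ g.natDegree = b ∧
        (∀ i, i < b - j → g.coeff i = 0) ∧
        (∀ w, 1 ≤ w → w ≤ min j b →
          (C ((f.coeff (a * b) : ℚ)) * g ^ a).coeff (a * b - w)
            = (f.map (Int.castRingHom ℚ)).coeff (a * b - w)) ∧
        (∀ w, w ≤ b →
          (g - X ^ b).coeff (b - w) * (((a : ℚ)) ^ 2 * (f.coeff (a * b) : ℚ)) ^ w
            ∈ AddSubgroup.zmultiples ((a : ℚ))) ∧
        (∀ w, w ≤ b →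
          |(g - X ^ b).coeff (b - w)| ≤
            Cg * ((intMaxNorm f : ℚ) / |(f.coeff (a * b) : ℚ)|) ^ w) by
    obtain ⟨Cg, hCg1, hP⟩ := H b
    refine ⟨Cg, hCg1, fun f hfd hfL => ?_⟩
    obtain ⟨g, h1, h2, _, h4, h5, h6⟩ := hP f hfd hfL
    exact ⟨g, h1, h2, fun w hw1 hw2 => h4 w hw1 (by omega), h5, h6⟩
  intro j
  induction j with
  | zero =>
    refine ⟨1, le_refl 1, fun f hfd hfL => ?_⟩
    refine ⟨X ^ b, monic_X_pow b, natDegree_X_pow b, ?_, ?_, ?_, ?_⟩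
    · intro i hi
      rw [coeff_X_pow, if_neg (by omega)]
    · intro w hw1 hw2
      omega
    · intro w hw
      rw [sub_self, coeff_zero, zero_mul]
      exact zero_mem _
    · intro w hw
      rw [sub_self, coeff_zero, abs_zero]
      have hρ : (0:ℚ) ≤ (intMaxNorm f : ℚ) / |(f.coeff (a * b) : ℚ)| := by positivity
      positivity
  | succ j ih =>
    obtain ⟨Cg, hCg1, hP⟩ := ih
    set CP : ℚ := (2 : ℚ) ^ a * ((a * b + 1 : ℚ) * Cg + 1) ^ a with hCP
    have hCP0 : 0 ≤ CP := by positivity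
    refine ⟨Cg + 1 + CP, by linarith, fun f hfd hfL => ?_⟩
    obtain ⟨g, hmon, hgd, hlow, hmatch, hden, hsize⟩ := hP f hfd hfL
    by_cases hjb : b ≤ j
    · refine ⟨g, hmon, hgd, fun i hi => hlow i (by omega),
        fun w hw1 hw2 => hmatch w hw1 (by omega), hden, fun w hw => ?_⟩
      refine le_trans (hsize w hw) ?_
      have h0 : (0:ℚ) ≤ ((intMaxNorm f : ℚ) / |(f.coeff (a * b) : ℚ)|) ^ w := by positivity
      exact mul_le_mul_of_nonneg_right (by linarith) h0
    -- main step : j + 1 ≤ b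
    · have hjb1 : j + 1 ≤ b := by omega
      set L : ℚ := ((f.coeff (a * b) : ℤ) : ℚ) with hLdef
      have hL0 : L ≠ 0 := Int.cast_ne_zero.mpr hfL
      have hLpos : 0 < |L| := abs_pos.mpr hL0
      set μ : ℚ := (intMaxNorm f : ℚ) with hμdef
      set ρ : ℚ := μ / |L| with hρdef
      have hμL : |L| ≤ μ := coeff_le_intMaxNorm f (a * b)
      have hρ1 : 1 ≤ ρ := (one_le_div hLpos).mpr hμL
      have hρ0 : 0 < ρ := by linarith
      set sQ : ℚ := ((a : ℚ)) ^ 2 * L with hsQdef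
      have ha0 : ((a:ℚ)) ≠ 0 := by
        have : (0:ℚ) < (a:ℚ) := by exact_mod_cast (by omega : 0 < a)
        linarith
      have haL0 : ((a:ℚ)) * L ≠ 0 := mul_ne_zero ha0 hL0
      set A : ℚ := (g ^ a).coeff (a * b - (j+1)) with hAdef
      have hAden := gpow_den a b ha (by omega) sQ g hgd hden (j+1) (by omega) hjb1
      have hAsz : |A| ≤ CP * ρ ^ (j+1) := by
        have h := gpow_size a b (by omega : 1 ≤ b) ρ Cg hρ1 (by linarith) g hgd hsize a
          le_rfl (j+1) (by
            calc j + 1 ≤ b := hjb1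
              _ ≤ a * b := Nat.le_mul_of_pos_left b (by omega))
        rw [hAdef, hCP]
        exact h
      set F1 : ℚ := ((f.coeff (a * b - (j+1)) : ℤ) : ℚ) with hF1def
      have hF1μ : |F1| ≤ μ := coeff_le_intMaxNorm f _
      set e : ℚ := (F1 - L * A) / ((a:ℚ) * L) with hedef
      set ε : ℚ[X] := C e * X ^ (b - (j+1)) with hεdef
      refine ⟨g + ε, ?_, ?_, ?_, ?_, ?_, ?_⟩
      case _ => -- Monic
        refine hmon.add_of_left ?_
        refine lt_of_le_of_lt (degree_C_mul_X_pow_le _ _) ?_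
        rw [degree_eq_natDegree hmon.ne_zero, hgd]
        exact_mod_cast (by omega : b - (j+1) < b)
      case _ => -- natDegree
        have hdeg : (g + ε).degree = g.degree := by
          refine degree_add_eq_left_of_degree_lt ?_
          refine lt_of_le_of_lt (degree_C_mul_X_pow_le _ _) ?_
          rw [degree_eq_natDegree hmon.ne_zero, hgd]
          exact_mod_cast (by omega : b - (j+1) < b)
        rw [← hgd]
        exact natDegree_eq_of_degree_eq hdeg
      case _ => -- low coefficients vanish
        intro i hi
        rw [coeff_add, hεdef, coeff_C_mul, coeff_X_pow, if_neg (by omega), mul_zero, add_zero]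
        exact hlow i (by omega)
      case _ => -- matching
        intro w hw1 hw2
        have hwj1 : w ≤ j + 1 := by omega
        have hwb : w ≤ b := by omega
        have hab2 : (a - 1) * b + b = a * b := by
          have h : a - 1 + 1 = a := by omega
          calc (a-1)*b + b = ((a-1)+1)*b := by ring
            _ = a * b := by rw [h]
        have hble : b - (j+1) ≤ a*b - w := by omega
        have hcoeff : ((g + ε) ^ a).coeff (a*b - w)
            = (g ^ a).coeff (a*b - w) + (a:ℚ) * e * (if w = j + 1 then 1 else 0) := by
          rw [add_pow]
          rw [finset_sum_coeff]
          rw [show a + 1 = (a-1) + 1 + 1 from by omega, sum_range_succ, sum_range_succ]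
          have hlast : a - 1 + 1 = a := by omega
          rw [hlast]
          have hterm_a : (g ^ a * ε ^ (a - a) * ((a.choose a : ℕ) : ℚ[X])).coeff (a*b - w)
              = (g^a).coeff (a*b-w) := by
            rw [Nat.sub_self, pow_zero, mul_one, Nat.choose_self]
            simp
          have hterm_a1 : (g ^ (a-1) * ε ^ (a - (a-1)) * ((a.choose (a-1) : ℕ) : ℚ[X])).coeff (a*b - w)
              = (a:ℚ) * e * (if w = j + 1 then 1 else 0) := by
            have h1 : a - (a-1) = 1 := by omega
            have hch : a.choose (a-1) = a := by
              rw [Nat.choose_symm (by omega : 1 ≤ a), Nat.choose_one_right]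
            rw [h1, pow_one, hch, hεdef]
            have hre : g ^ (a-1) * (C e * X ^ (b - (j+1))) * ((a : ℕ) : ℚ[X])
                = (C ((a:ℚ) * e) * g ^ (a-1)) * X ^ (b - (j+1)) := by
              rw [← C_eq_natCast, C_mul]
              ring
            rw [hre, coeff_mul_X_pow', if_pos hble, coeff_C_mul]
            have hidx : a*b - w - (b - (j+1)) = (a-1)*b + (j+1 - w) := by omega
            rw [hidx]
            have hdeg : (g ^ (a-1)).natDegree = (a-1)*b := by rw [hmon.natDegree_pow, hgd]
            by_cases hwj : w = j+1
            · rw [if_pos hwj]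
              have hz : j + 1 - w = 0 := by omega
              rw [hz, Nat.add_zero]
              have hc1 := (hmon.pow (a-1)).coeff_natDegree
              rw [hdeg] at hc1
              rw [hc1, mul_one]
            · rw [if_neg hwj]
              have hc0 : (g ^ (a-1)).coeff ((a-1)*b + (j+1-w)) = 0 := by
                apply coeff_eq_zero_of_natDegree_lt
                rw [hdeg]
                omega
              rw [hc0]
          have hsum0 : (∑ k ∈ range (a-1),
              (g ^ k * ε ^ (a - k) * ((a.choose k : ℕ) : ℚ[X])).coeff (a*b - w)) = 0 := by
            refine Finset.sum_eq_zero fun k hk => ?_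
            have hk1 : k < a - 1 := mem_range.mp hk
            apply coeff_eq_zero_of_natDegree_lt
            have hd2 : (ε ^ (a-k)).natDegree ≤ (a-k) * (b - (j+1)) := by
              refine le_trans natDegree_pow_le ?_
              refine Nat.mul_le_mul_left _ ?_
              rw [hεdef]
              exact natDegree_C_mul_X_pow_le _ _
            have hd3 : (g ^ k * ε ^ (a-k) * ((a.choose k : ℕ) : ℚ[X])).natDegree
                ≤ k*b + (a-k)*(b-(j+1)) := by
              refine le_trans natDegree_mul_le ?_
              have hnc : ((a.choose k : ℕ) : ℚ[X]).natDegree = 0 := natDegree_natCast _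
              rw [hnc, Nat.add_zero]
              refine le_trans natDegree_mul_le ?_
              refine Nat.add_le_add ?_ hd2
              refine le_trans natDegree_pow_le ?_
              rw [hgd]
            have e1 : (a-k)*(b-(j+1)) + (a-k)*(j+1) = (a-k)*b := by
              rw [← Nat.mul_add]; congr 1; omega
            have e2 : k*b + (a-k)*b = a*b := by
              rw [← Nat.add_mul]; congr 1; omega
            have e3 : 2*(j+1) ≤ (a-k)*(j+1) := Nat.mul_le_mul_right _ (by omega)
            omega
          rw [hsum0, zero_add, hterm_a1, hterm_a]
          ring
        rcases Nat.lt_or_ge w (j+1) with hlt | hge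
        · have hm := hmatch w hw1 (by omega)
          rw [coeff_C_mul] at hm ⊢
          rw [hcoeff, if_neg (by omega), mul_zero, add_zero]
          exact hm
        · have hwj : w = j+1 := by omega
          rw [coeff_C_mul, hcoeff, if_pos hwj, mul_one, hwj]
          have hfc : (f.map (Int.castRingHom ℚ)).coeff (a*b-(j+1)) = F1 := by
            rw [coeff_map, hF1def]
            rfl
          rw [hfc, ← hAdef, hedef]
          field_simp
          ring
      case _ => -- denominators
        intro w hw
        have htail : (g + ε - X ^ b).coeff (b - w)
            = (g - X^b).coeff (b-w) + e * (if b - w = b - (j+1) then 1 else 0) := by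
          rw [show g + ε - X^b = (g - X^b) + ε from by ring, coeff_add, hεdef, coeff_C_mul,
            coeff_X_pow]
        by_cases hwj : w = j+1
        · rw [htail, if_pos (by omega), mul_one]
          have h0 : (g - X^b).coeff (b - w) = 0 := by
            rw [show b - w = b - (j+1) from by omega, coeff_sub, coeff_X_pow, if_neg (by omega),
              hlow (b-(j+1)) (by omega), sub_zero]
          rw [h0, zero_add, hwj]
          obtain ⟨z, hz⟩ := zmul_iff.mp hAden
          set n1 : ℤ := f.coeff (a*b - (j+1)) with hn1
          have hsQp : sQ^(j+1) = (a:ℚ)^(2*(j+1)) * L^(j+1) := by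
            rw [hsQdef, mul_pow, ← pow_mul]
          have hz' : A * ((a:ℚ)^(2*(j+1)) * L^(j+1)) = (z:ℚ) * (a:ℚ)^2 := by
            rw [← hsQp]; exact hz
          have hprod : (F1 - L*A) * sQ^(j+1)
              = (((n1 * (a:ℤ)^(2*j) * (f.coeff (a*b))^j - z : ℤ) : ℚ) * (a:ℚ)) * ((a:ℚ)*L) := by
            rw [hsQp]
            have hF1n : F1 = (n1:ℚ) := by rw [hF1def]
            have hLL : ((f.coeff (a*b) : ℤ) : ℚ) = L := by rw [hLdef]
            push_cast
            rw [hF1n, hLL]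
            linear_combination (-(L)) * hz'
          refine zmul_iff.mpr ⟨n1 * (a:ℤ)^(2*j) * (f.coeff (a*b))^j - z, ?_⟩
          rw [hedef, div_mul_eq_mul_div, hprod, mul_div_cancel_right₀ _ haL0]
        · rw [htail, if_neg (by omega), mul_zero, add_zero]
          exact hden w hw
      case _ => -- sizes
        intro w hw
        have htail : (g + ε - X ^ b).coeff (b - w)
            = (g - X^b).coeff (b-w) + e * (if b - w = b - (j+1) then 1 else 0) := by
          rw [show g + ε - X^b = (g - X^b) + ε from by ring, coeff_add, hεdef, coeff_C_mul,
            coeff_X_pow]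
        by_cases hwj : w = j+1
        · rw [htail, if_pos (by omega), mul_one]
          have h0 : (g - X^b).coeff (b - w) = 0 := by
            rw [show b - w = b - (j+1) from by omega, coeff_sub, coeff_X_pow, if_neg (by omega),
              hlow (b-(j+1)) (by omega), sub_zero]
          rw [h0, zero_add, hwj]
          have hbound : |e| ≤ (1 + CP) * ρ^(j+1) := by
            rw [hedef, abs_div]
            have hden_abs : |(a:ℚ)*L| = (a:ℚ)*|L| := by
              rw [abs_mul, abs_of_nonneg (by positivity : (0:ℚ) ≤ (a:ℚ))]
            rw [hden_abs, div_le_iff₀ (by positivity)]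
            have h1 : |F1 - L*A| ≤ μ + |L| * (CP*ρ^(j+1)) := by
              refine le_trans (abs_sub _ _) ?_
              refine add_le_add hF1μ ?_
              rw [abs_mul]
              exact mul_le_mul_of_nonneg_left hAsz (abs_nonneg _)
            have hμρ : μ = ρ * |L| := by
              rw [hρdef, div_mul_cancel₀ _ (ne_of_gt hLpos)]
            have hρp : ρ ≤ ρ^(j+1) := by
              calc ρ = ρ^1 := (pow_one ρ).symm
                _ ≤ ρ^(j+1) := pow_le_pow_right₀ hρ1 (by omega)
            have ha1 : (1:ℚ) ≤ (a:ℚ) := by exact_mod_cast (by omega : 1 ≤ a)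
            calc |F1 - L*A| ≤ μ + |L| * (CP*ρ^(j+1)) := h1
              _ = (ρ + CP*ρ^(j+1)) * |L| := by rw [hμρ]; ring
              _ ≤ ((1 + CP)*ρ^(j+1)) * |L| := by nlinarith
              _ ≤ (1 + CP)*ρ^(j+1)*((a:ℚ)*|L|) := by
                refine mul_le_mul_of_nonneg_left ?_ (by positivity)
                nlinarith
          refine le_trans hbound ?_
          have hρw : (0:ℚ) ≤ ρ^(j+1) := by positivity
          exact mul_le_mul_of_nonneg_right (by linarith) hρw
        · rw [htail, if_neg (by omega), mul_zero, add_zero]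
          refine le_trans (hsize w hw) ?_
          have hρw : (0:ℚ) ≤ ρ^w := by positivity
          exact mul_le_mul_of_nonneg_right (by linarith) hρw


lemma key (a b : ℕ) (ha : 2 ≤ a) (hb : 2 ≤ b) :
    ∃ C : ℚ, 1 ≤ C ∧ ∀ f : ℤ[X], f.natDegree = a * b →
      IndecomposablePoly (f.map (Int.castRingHom ℚ)) →
      ∃ N : ℤ, N ≠ 0 ∧ |(N : ℚ)| ≤ C * (intMaxNorm f : ℚ) ^ (a * b) ∧
        ∀ (K : Type) [inst : Field K], (a : K) ≠ 0 → ((f.coeff (a * b) : ℤ) : K) ≠ 0 →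
          ∀ u g1 : K[X], u.natDegree = a → g1.natDegree = b →
            f.map (Int.castRingHom K) = u.comp g1 → ((N : ℤ) : K) = 0 := by
  obtain ⟨Cg, hCg1, hcons⟩ := construct a b ha hb
  set CP : ℚ := (2 : ℚ) ^ a * ((a * b + 1 : ℚ) * Cg + 1) ^ a with hCPdef
  have hCP0 : 0 ≤ CP := by positivity
  set CS : ℚ := (1 + CP) ^ (a + 1) with hCSdef
  have hCS1 : 1 ≤ CS := one_le_pow₀ (by linarith)
  refine ⟨CS * ((a : ℚ) ^ 2) ^ (a * b), ?_, fun f hfd hindec => ?_⟩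
  · have h2 : (1:ℚ) ≤ ((a:ℚ)^2)^(a*b) := by
      refine one_le_pow₀ ?_
      have : (1:ℚ) ≤ (a:ℚ) := by exact_mod_cast (by omega : 1 ≤ a)
      nlinarith
    nlinarith
  -- setup
  have hab1 : 1 ≤ a * b := by
    calc 1 ≤ 2 * 2 := by omega
      _ ≤ a * b := Nat.mul_le_mul ha hb
  have hf0 : f ≠ 0 := fun h => by rw [h] at hfd; simp at hfd; omega
  have hL0 : f.coeff (a * b) ≠ 0 := by
    have := leadingCoeff_ne_zero.mpr hf0
    rwa [leadingCoeff, hfd] at this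
  obtain ⟨g, hmon, hgd, hmatch, hden, hsize⟩ := hcons f hfd hL0
  set L : ℚ := ((f.coeff (a * b) : ℤ) : ℚ) with hLdef
  have hL0Q : L ≠ 0 := Int.cast_ne_zero.mpr hL0
  have hLpos : 0 < |L| := abs_pos.mpr hL0Q
  set μ : ℚ := (intMaxNorm f : ℚ) with hμdef
  set ρ : ℚ := μ / |L| with hρdef
  have hμL : |L| ≤ μ := coeff_le_intMaxNorm f (a * b)
  have hρ1 : 1 ≤ ρ := (one_le_div hLpos).mpr hμL
  have hμ1 : 1 ≤ μ := by
    have h1 : (1:ℚ) ≤ |L| := by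
      have : (1:ℤ) ≤ |f.coeff (a*b)| := Int.one_le_abs (by omega)
      calc (1:ℚ) ≤ ((|f.coeff (a*b)| : ℤ) : ℚ) := by exact_mod_cast this
        _ = |L| := by push_cast; rfl
    linarith
  have haQ1 : (1:ℚ) ≤ (a:ℚ) := by exact_mod_cast (by omega : 1 ≤ a)
  set sQ : ℚ := ((a : ℚ)) ^ 2 * L with hsQdef
  have hsQ0 : sQ ≠ 0 := by
    refine mul_ne_zero ?_ hL0Q
    positivity
  set sZ : ℤ := (a : ℤ) ^ 2 * f.coeff (a * b) with hsZdef
  have hsZQ : ((sZ : ℤ) : ℚ) = sQ := by rw [hsZdef, hsQdef, hLdef]; push_cast; ring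
  set Ma : ℚ := (a : ℚ) ^ 2 * μ with hMadef
  have hMa1 : 1 ≤ Ma := by nlinarith
  have habsQ : |sQ| = (a:ℚ)^2 * |L| := by
    rw [hsQdef, abs_mul, abs_of_nonneg (by positivity : (0:ℚ) ≤ (a:ℚ)^2)]
  -- integer coefficients of the scaled root
  have hgsz : ∀ w ≤ b, |g.coeff (b - w)| ≤ Cg * ρ ^ w := by
    intro w hw
    by_cases hw0 : w = 0
    · subst hw0
      have : g.coeff (b - 0) = 1 := by
        have := hmon.coeff_natDegree
        rwa [hgd] at this
      rw [this]
      simp only [pow_zero, mul_one]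
      rw [abs_one]
      linarith
    · have h1 : (g - X ^ b).coeff (b - w) = g.coeff (b - w) := by
        rw [coeff_sub, coeff_X_pow, if_neg (by omega), sub_zero]
      have := hsize w hw
      rwa [h1] at this
  have hzG : ∀ w : ℕ, ∃ z : ℤ, w ≤ b → g.coeff (b - w) * sQ ^ w = (z : ℚ) := by
    intro w
    by_cases hw : w ≤ b
    · by_cases hw0 : w = 0
      · refine ⟨1, fun _ => ?_⟩
        subst hw0
        have h1 : g.coeff (b - 0) = 1 := by
          have := hmon.coeff_natDegree
          rwa [hgd] at this
        rw [h1]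
        simp
      · obtain ⟨z, hz⟩ := zmul_iff.mp (hden w hw)
        refine ⟨z * a, fun _ => ?_⟩
        have h1 : (g - X ^ b).coeff (b - w) = g.coeff (b - w) := by
          rw [coeff_sub, coeff_X_pow, if_neg (by omega), sub_zero]
        rw [h1] at hz
        rw [hz]
        push_cast
        ring
    · exact ⟨0, fun h => absurd h hw⟩
  choose zG hzG' using hzG
  set G : ℤ[X] := ∑ w ∈ range (b + 1), C (zG w) * X ^ (b - w) with hGdef
  have hGcoeff : ∀ i, G.coeff i = if i ≤ b then zG (b - i) else 0 := by
    intro i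
    rw [hGdef, finset_sum_coeff]
    split_ifs with h
    · rw [Finset.sum_eq_single (b - i)]
      · rw [coeff_C_mul, coeff_X_pow, if_pos (by omega), mul_one]
      · intro w hw hne
        have hwb : w ≤ b := by have := mem_range.mp hw; omega
        rw [coeff_C_mul, coeff_X_pow, if_neg (by omega), mul_zero]
      · intro hmem
        exact absurd (mem_range.mpr (by omega)) hmem
    · refine Finset.sum_eq_zero fun w hw => ?_
      have hwb : w ≤ b := by have := mem_range.mp hw; omega
      rw [coeff_C_mul, coeff_X_pow, if_neg (by omega), mul_zero]
  have hGdeg : G.natDegree ≤ b := by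
    rw [natDegree_le_iff_coeff_eq_zero]
    intro N hN
    rw [hGcoeff, if_neg (by omega)]
  have hGrel : (G.map (Int.castRingHom ℚ)).comp (C sQ * X) = C (sQ ^ b) * g := by
    ext i
    rw [coeff_comp_C_mul_X, coeff_map, coeff_C_mul]
    by_cases h : i ≤ b
    · rw [hGcoeff, if_pos h]
      have h2 := hzG' (b - i) (by omega)
      have h3 : b - (b - i) = i := by omega
      rw [h3] at h2
      rw [eq_intCast]
      rw [← h2]
      have h4 : sQ ^ (b - i) * sQ ^ i = sQ ^ b := by
        rw [← pow_add]
        congr 1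
        omega
      calc g.coeff i * sQ ^ (b - i) * sQ ^ i = g.coeff i * (sQ ^ (b - i) * sQ ^ i) := by ring
        _ = sQ ^ b * g.coeff i := by rw [h4]; ring
    · rw [hGcoeff, if_neg h]
      have h2 : g.coeff i = 0 := coeff_eq_zero_of_natDegree_lt (by omega)
      rw [h2, mul_zero]
      simp
  have hGsz : ∀ w ≤ b, |(zG w : ℚ)| ≤ Cg * Ma ^ w := by
    intro w hw
    have h1 := hzG' w hw
    have h2 : |(zG w : ℚ)| = |g.coeff (b - w)| * |sQ| ^ w := by
      rw [← h1, abs_mul, abs_pow]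
    rw [h2, habsQ]
    have h3 := hgsz w hw
    calc |g.coeff (b - w)| * ((a:ℚ)^2 * |L|) ^ w ≤ (Cg * ρ ^ w) * ((a:ℚ)^2 * |L|) ^ w := by
          refine mul_le_mul_of_nonneg_right h3 (by positivity)
      _ = Cg * Ma ^ w := by
          rw [hMadef, hρdef]
          rw [mul_pow, mul_pow, div_pow]
          field_simp
  -- the ℚ-side recursion is nonzero
  set fQ : ℚ[X] := f.map (Int.castRingHom ℚ) with hfQdef
  have hfQL : fQ.coeff (a * b) = L := by rw [hfQdef, coeff_map, eq_intCast, hLdef]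
  have hfQdeg : fQ.natDegree = a * b := by
    refine le_antisymm (le_trans natDegree_map_le (le_of_eq hfd)) ?_
    refine le_natDegree_of_ne_zero ?_
    rw [hfQL]
    exact hL0Q
  have hQne : Frec a b g fQ (a + 1) ≠ 0 := by
    intro h0
    obtain ⟨u, hu, hcomp⟩ := Frec_decomp hmon hgd (by omega : 1 ≤ a) (by rw [hfQL]; exact hL0Q) h0
    exact hindec.2 ⟨u, g, by omega, by omega, hcomp⟩
  set h : ℚ[X] := Frec a b g fQ (a + 1) with hhdef
  set m : ℕ := h.natDegree with hmdef
  have hcm : h.coeff m ≠ 0 := by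
    rw [hmdef]
    exact leadingCoeff_ne_zero.mpr hQne
  have hmd : m ≤ a * b := by
    rw [hmdef, hhdef]
    exact Frec_natDegree_le a b g fQ (le_of_eq hfQdeg) (le_of_eq hgd) (a + 1)
  have hm1 : 1 ≤ m := by
    by_contra hc
    have hm0 : m = 0 := by omega
    have hcz : h.coeff 0 = 0 := by
      have := Frec_coeff_node (a := a) (b := b) (f := fQ) hmon hgd a
      rwa [Nat.sub_self, Nat.zero_mul] at this
    rw [hm0, hcz] at hcm
    exact hcm rfl
  -- transfer over ℚ
  have hfrelQ : ((f.scaleRoots sZ).map (Int.castRingHom ℚ)).comp (C sQ * X)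
      = C (sQ ^ (a * b)) * fQ := by
    have := scaleRoots_comp_rel (Int.castRingHom ℚ) sZ f (a * b) hfd
    rw [show (Int.castRingHom ℚ) sZ = sQ from by rw [eq_intCast]; exact hsZQ] at this
    exact this
  have hscaleQ := Frec_scale a b (Int.castRingHom ℚ) sQ G (f.scaleRoots sZ) g fQ hGrel hfrelQ
  set N : ℤ := (Frec a b G (f.scaleRoots sZ) (a + 1)).coeff m with hNdef
  have hNrel : (N : ℚ) * sQ ^ m = sQ ^ (a * b) * h.coeff m := by
    have := congrArg (fun P : ℚ[X] => P.coeff m) (hscaleQ (a + 1))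
    simp only [coeff_comp_C_mul_X, coeff_map, coeff_C_mul, eq_intCast] at this
    exact this
  have hN0 : N ≠ 0 := by
    intro h0
    rw [h0] at hNrel
    simp only [Int.cast_zero, zero_mul] at hNrel
    have := hNrel.symm
    rcases mul_eq_zero.mp this with h1 | h2
    · exact pow_ne_zero _ hsQ0 h1
    · exact hcm h2
  -- size bound
  refine ⟨N, hN0, ?_, ?_⟩
  · -- size bound
    have hGp_size : ∀ k, k ≤ a → ∀ v, v ≤ k * b →
        |(((G ^ k).coeff (k * b - v) : ℤ) : ℚ)| ≤ CP * Ma ^ v := by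
      intro k hk v hv
      have hGpow : ((G ^ k).map (Int.castRingHom ℚ)).comp (C sQ * X) = C (sQ ^ (k * b)) * g ^ k := by
        rw [Polynomial.map_pow, pow_comp, hGrel, mul_pow, ← C_pow, ← pow_mul, Nat.mul_comm b k]
      have h1 := congrArg (fun P : ℚ[X] => P.coeff (k * b - v)) hGpow
      simp only [coeff_comp_C_mul_X, coeff_map, coeff_C_mul, eq_intCast] at h1
      have hsplit : sQ ^ (k * b) = sQ ^ v * sQ ^ (k * b - v) := by
        rw [← pow_add]
        congr 1
        omega
      have h2 : (((G ^ k).coeff (k * b - v) : ℤ) : ℚ) * sQ ^ (k * b - v)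
          = (sQ ^ v * (g ^ k).coeff (k * b - v)) * sQ ^ (k * b - v) := by
        rw [h1, hsplit]
        ring
      have h3 : (((G ^ k).coeff (k * b - v) : ℤ) : ℚ) = sQ ^ v * (g ^ k).coeff (k * b - v) :=
        mul_right_cancel₀ (pow_ne_zero _ hsQ0) h2
      rw [h3, abs_mul, abs_pow, habsQ]
      have h4 := gpow_size a b (by omega : 1 ≤ b) ρ Cg hρ1 (by linarith) g hgd hsize k hk v hv
      have h5 : ((a:ℚ)^2*|L|) * ρ = Ma := by
        rw [hρdef, hMadef]
        field_simp
      calc ((a:ℚ)^2*|L|)^v * |(g^k).coeff (k*b - v)| ≤ ((a:ℚ)^2*|L|)^v * (CP * ρ^v) := by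
            refine mul_le_mul_of_nonneg_left ?_ (by positivity)
            rw [hCPdef]
            exact h4
        _ = CP * (((a:ℚ)^2*|L|) * ρ)^v := by rw [mul_pow]; ring
        _ = CP * Ma ^ v := by rw [h5]
    have hSF : ∀ k, k ≤ a + 1 → ∀ w, w ≤ a * b →
        |(((Frec a b G (f.scaleRoots sZ) k).coeff (a * b - w) : ℤ) : ℚ)|
          ≤ (1 + CP) ^ k * (μ * Ma ^ w) := by
      intro k
      induction k with
      | zero =>
        intro _ w hw
        simp only [Frec]
        rw [coeff_scaleRoots, hfd, show a * b - (a * b - w) = w from by omega]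
        rw [pow_zero, one_mul]
        push_cast
        rw [abs_mul, abs_pow]
        have hsZMa : |((sZ : ℤ) : ℚ)| ≤ Ma := by
          rw [hsZQ, habsQ, hMadef]
          refine mul_le_mul_of_nonneg_left hμL (by positivity)
        refine mul_le_mul (coeff_le_intMaxNorm f _) ?_ (by positivity) (by linarith)
        exact pow_le_pow_left₀ (abs_nonneg _) hsZMa w
      | succ k ih =>
        intro hk1 w hw
        have hkb : k * b ≤ a * b := Nat.mul_le_mul_right _ (by omega)
        have hsub : (a - k) * b = a * b - k * b := Nat.sub_mul a k b
        have hCP1 : (1:ℚ) ≤ 1 + CP := by linarith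
        have hCPk : (0:ℚ) ≤ (1 + CP)^k := by positivity
        have hMaw : (0:ℚ) ≤ Ma ^ w := by positivity
        simp only [Frec, coeff_sub, coeff_C_mul]
        push_cast
        refine le_trans (abs_sub _ _) ?_
        have hx := ih (by omega) w hw
        by_cases hcw : w < k * b
        · have hy0 : (G ^ (a - k)).coeff (a * b - w) = 0 := by
            apply coeff_eq_zero_of_natDegree_lt
            have hdG : (G ^ (a - k)).natDegree ≤ (a - k) * b :=
              le_trans natDegree_pow_le (Nat.mul_le_mul_left _ hGdeg)
            omega
          rw [hy0]
          push_cast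
          rw [mul_zero, abs_zero, add_zero]
          refine le_trans hx ?_
          refine mul_le_mul_of_nonneg_right ?_ (by positivity)
          exact pow_le_pow_right₀ hCP1 (by omega)
        · have hY := ih (by omega) (k * b) hkb
          rw [← hsub] at hY
          have hidx : a * b - w = (a - k) * b - (w - k * b) := by omega
          have hv : w - k * b ≤ (a - k) * b := by omega
          have hvy := hGp_size (a - k) (by omega) (w - k * b) hv
          rw [← hidx] at hvy
          have hMasplit : Ma ^ (k * b) * Ma ^ (w - k * b) = Ma ^ w := by
            rw [← pow_add]
            congr 1
            omega
          calc |(((Frec a b G (f.scaleRoots sZ) k).coeff (a*b - w) : ℤ) : ℚ)|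
                + |(((Frec a b G (f.scaleRoots sZ) k).coeff ((a-k)*b) : ℤ) : ℚ)
                    * (((G ^ (a-k)).coeff (a*b - w) : ℤ) : ℚ)|
              ≤ (1 + CP)^k * (μ * Ma^w)
                + ((1 + CP)^k * (μ * Ma^(k*b))) * (CP * Ma^(w - k*b)) := by
                refine add_le_add hx ?_
                rw [abs_mul]
                refine mul_le_mul hY hvy (abs_nonneg _) ?_
                positivity
            _ = (1 + CP)^k * (μ * Ma^w) + CP * ((1 + CP)^k * μ * (Ma^(k*b) * Ma^(w - k*b))) := by
                ring
            _ = (1 + CP)^k * (μ * Ma^w) + CP * ((1 + CP)^k * μ * Ma^w) := by rw [hMasplit]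
            _ = (1 + CP)^(k+1) * (μ * Ma^w) := by rw [pow_succ]; ring
    have hfin := hSF (a + 1) le_rfl (a * b - m) (by omega)
    rw [show a * b - (a * b - m) = m from by omega] at hfin
    rw [← hNdef] at hfin
    refine le_trans hfin ?_
    have h1 : Ma ^ (a*b - m) = ((a:ℚ)^2)^(a*b - m) * μ^(a*b - m) := by
      rw [hMadef, mul_pow]
    have h2 : μ * Ma ^ (a*b - m) = μ^(a*b - m + 1) * ((a:ℚ)^2)^(a*b - m) := by
      rw [h1, pow_succ]
      ring
    rw [h2, ← hCSdef]
    have h3 : μ^(a*b - m + 1) ≤ μ^(a*b) := pow_le_pow_right₀ hμ1 (by omega)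
    have h4 : ((a:ℚ)^2)^(a*b - m) ≤ ((a:ℚ)^2)^(a*b) := by
      refine pow_le_pow_right₀ (one_le_pow₀ haQ1) (by omega)
    calc CS * (μ^(a*b - m + 1) * ((a:ℚ)^2)^(a*b - m))
        ≤ CS * (μ^(a*b) * ((a:ℚ)^2)^(a*b)) := by
          refine mul_le_mul_of_nonneg_left ?_ (by linarith)
          refine mul_le_mul h3 h4 (by positivity) (by positivity)
      _ = CS * ((a:ℚ)^2)^(a*b) * μ^(a*b) := by ring
  · intro K instK haK hLK u g1 hu hg1 hcomp
    set φ : ℤ →+* K := Int.castRingHom K with hφdef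
    set c : K := ((sZ : ℤ) : K) with hcdef
    have hc0 : c ≠ 0 := by
      rw [hcdef, hsZdef]
      push_cast
      exact mul_ne_zero (pow_ne_zero 2 haK) hLK
    set LK : K := ((f.coeff (a*b) : ℤ) : K) with hLKdef
    set fK : K[X] := f.map φ with hfKdef
    have hfKL : fK.coeff (a*b) = LK := by
      rw [hfKdef, coeff_map, hφdef, eq_intCast, hLKdef]
    have hfKdeg : fK.natDegree = a*b :=
      le_antisymm (le_trans natDegree_map_le (le_of_eq hfd))
        (le_natDegree_of_ne_zero (by rw [hfKL]; exact hLK))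
    set gK : K[X] := C ((c^b)⁻¹) * ((G.map φ).comp (C c * X)) with hgKdef
    have hgKcoeff : ∀ i, gK.coeff i = (c^b)⁻¹ * (((G.coeff i : ℤ) : K) * c^i) := by
      intro i
      rw [hgKdef, coeff_C_mul, coeff_comp_C_mul_X, coeff_map, hφdef, eq_intCast]
    have hG0 : G.coeff b = 1 := by
      rw [hGcoeff, if_pos le_rfl, Nat.sub_self]
      have h2 := hzG' 0 (by omega)
      have h3 : g.coeff (b - 0) = 1 := by
        have := hmon.coeff_natDegree
        rwa [hgd] at this
      rw [h3, pow_zero, one_mul] at h2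
      exact_mod_cast h2.symm
    have hgKb : gK.coeff b = 1 := by
      rw [hgKcoeff, hG0]
      push_cast
      rw [one_mul, inv_mul_cancel₀ (pow_ne_zero b hc0)]
    have hgKhigh : ∀ i, b < i → gK.coeff i = 0 := by
      intro i hi
      rw [hgKcoeff, hGcoeff, if_neg (by omega)]
      push_cast
      ring
    have hgKdeg : gK.natDegree = b :=
      le_antisymm (natDegree_le_iff_coeff_eq_zero.mpr hgKhigh)
        (le_natDegree_of_ne_zero (by rw [hgKb]; exact one_ne_zero))
    have hgKmon : gK.Monic := monic_of_natDegree_le_of_coeff_eq_one b (le_of_eq hgKdeg) hgKb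
    have hgKrel : (G.map φ).comp (C c * X) = C (c^b) * gK := by
      rw [hgKdef, ← mul_assoc, ← C_mul, mul_inv_cancel₀ (pow_ne_zero b hc0), C_1, one_mul]
    have hID : ∀ i, a*b - b ≤ i → i ≤ a*b →
        f.coeff (a*b) * (G^a).coeff i = sZ^(a*b - i) * f.coeff i := by
      intro i hi1 hi2
      have hGpowQ : ((G^a).map (Int.castRingHom ℚ)).comp (C sQ * X) = C (sQ^(a*b)) * g^a := by
        rw [Polynomial.map_pow, pow_comp, hGrel, mul_pow, ← C_pow, ← pow_mul, Nat.mul_comm b a]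
      have h1 := congrArg (fun P : ℚ[X] => P.coeff i) hGpowQ
      simp only [coeff_comp_C_mul_X, coeff_map, coeff_C_mul, eq_intCast] at h1
      have h2 : L * (g^a).coeff i = ((f.coeff i : ℤ) : ℚ) := by
        rcases eq_or_lt_of_le hi2 with he | hlt
        · have h3 : (g^a).coeff (a*b) = 1 := by
            have h4 := (hmon.pow a).coeff_natDegree
            rwa [hmon.natDegree_pow, hgd] at h4
          rw [he, h3, mul_one, hLdef]
        · have h5 := hmatch (a*b - i) (by omega) (by omega)
          rw [show a*b - (a*b - i) = i from by omega] at h5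
          rw [coeff_C_mul] at h5
          rw [h5, hfQdef, coeff_map, eq_intCast]
      have h4 : ((f.coeff (a*b) * (G^a).coeff i : ℤ) : ℚ)
          = ((sZ^(a*b - i) * f.coeff i : ℤ) : ℚ) := by
        push_cast
        rw [hsZQ, ← hLdef, ← h2]
        have hsplit : sQ^(a*b) = sQ^(a*b - i) * sQ^i := by
          rw [← pow_add]
          congr 1
          omega
        have h5 : (((G^a).coeff i : ℤ) : ℚ) * sQ^i = (sQ^(a*b - i) * (g^a).coeff i) * sQ^i := by
          rw [h1, hsplit]
          ring
        have h6 := mul_right_cancel₀ (pow_ne_zero i hsQ0) h5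
        rw [h6]
        ring
      exact_mod_cast h4
    have hgKpow : ((G^a).map φ).comp (C c * X) = C (c^(a*b)) * gK^a := by
      rw [Polynomial.map_pow, pow_comp, hgKrel, mul_pow, ← C_pow, ← pow_mul, Nat.mul_comm b a]
    have hKmatch : ∀ i, a*b - b ≤ i → i ≤ a*b → (C LK * gK^a).coeff i = fK.coeff i := by
      intro i hi1 hi2
      have h1 := congrArg (fun P : K[X] => P.coeff i) hgKpow
      simp only [coeff_comp_C_mul_X, coeff_map, eq_intCast, coeff_C_mul, hφdef] at h1
      have h2 := hID i hi1 hi2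
      have h3 : LK * (((G^a).coeff i : ℤ) : K) = c^(a*b - i) * ((f.coeff i : ℤ) : K) := by
        have h7 := congrArg (fun z : ℤ => ((z : ℤ) : K)) h2
        simp only [Int.cast_mul, Int.cast_pow] at h7
        rw [hLKdef, hcdef]
        exact h7
      have h4 : LK * (((G^a).coeff i : ℤ) : K) * c^i = c^(a*b) * (LK * (gK^a).coeff i) := by
        calc LK * (((G^a).coeff i : ℤ) : K) * c^i
            = LK * ((((G^a).coeff i : ℤ) : K) * c^i) := by ring
          _ = LK * (c^(a*b) * (gK^a).coeff i) := by rw [h1]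
          _ = c^(a*b) * (LK * (gK^a).coeff i) := by ring
      rw [h3] at h4
      have hsplit : c^(a*b) = c^(a*b - i) * c^i := by
        rw [← pow_add]
        congr 1
        omega
      have h5 : c^(a*b) * ((f.coeff i : ℤ) : K) = c^(a*b) * (LK * (gK^a).coeff i) := by
        rw [← h4, hsplit]
        ring
      have h6 := mul_left_cancel₀ (pow_ne_zero (a*b) hc0) h5
      rw [coeff_C_mul, ← h6, hfKdef, coeff_map, hφdef, eq_intCast]
    have hg1ne : g1 ≠ 0 := ne_zero_of_natDegree_gt (show 0 < g1.natDegree from by omega)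
    set lc : K := g1.leadingCoeff with hlcdef
    have hlc0 : lc ≠ 0 := leadingCoeff_ne_zero.mpr hg1ne
    set g2 : K[X] := C lc⁻¹ * g1 with hg2def
    have hg2mon : g2.Monic := by
      show g2.leadingCoeff = 1
      rw [hg2def, leadingCoeff_mul, leadingCoeff_C, inv_mul_cancel₀ hlc0]
    have hg2deg : g2.natDegree = b := by
      rw [hg2def, natDegree_C_mul (inv_ne_zero hlc0), hg1]
    set u2 : K[X] := u.comp (C lc * X) with hu2def
    have hu2deg : u2.natDegree = a := by
      rw [hu2def, natDegree_comp, hu, natDegree_C_mul hlc0, natDegree_X, mul_one]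
    have hclg2 : C lc * g2 = g1 := by
      rw [hg2def, ← mul_assoc, ← C_mul, mul_inv_cancel₀ hlc0, C_1, one_mul]
    have hcomp2 : fK = u2.comp g2 := by
      rw [hu2def, comp_assoc, mul_comp, C_comp, X_comp, hclg2]
      exact hcomp
    have hu2top : u2.coeff a = LK := by
      have h1 := coeff_comp_top hg2mon hg2deg (by omega : 1 ≤ b) u2 (le_of_eq hu2deg)
      rw [← hcomp2] at h1
      rw [← h1, hfKL]
    have hdiff2 : ∀ i, a*b - b < i → (fK - C LK * g2^a).coeff i = 0 := by
      intro i hi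
      have hrepr : fK - C LK * g2^a = (u2 - C LK * X^a).comp g2 := by
        rw [sub_comp, ← hcomp2, mul_comp, C_comp, pow_comp, X_comp]
      rw [hrepr]
      apply coeff_eq_zero_of_natDegree_lt
      have hdu : (u2 - C LK * X^a).natDegree ≤ a - 1 := by
        rw [natDegree_le_iff_coeff_eq_zero]
        intro M hM
        rcases eq_or_lt_of_le (show a ≤ M from by omega) with he | hlt
        · rw [coeff_sub, ← he, hu2top, coeff_C_mul, coeff_X_pow, if_pos rfl, mul_one, sub_self]
        · rw [coeff_sub, coeff_eq_zero_of_natDegree_lt (by omega : u2.natDegree < M),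
            coeff_C_mul, coeff_X_pow, if_neg (by omega), mul_zero, sub_zero]
      rw [natDegree_comp, hg2deg]
      calc (u2 - C LK * X^a).natDegree * b ≤ (a-1) * b := Nat.mul_le_mul_right _ hdu
        _ = a*b - b := Nat.sub_one_mul a b
        _ < i := hi
    have hpair : ∀ i, a*b - b < i → (C LK * gK^a).coeff i = (C LK * g2^a).coeff i := by
      intro i hi
      by_cases hile : i ≤ a*b
      · have h1 := hKmatch i (by omega) hile
        have h2 := hdiff2 i hi
        rw [coeff_sub, sub_eq_zero] at h2
        rw [h1, ← h2]
      · have hd1 : (C LK * gK^a).natDegree ≤ a*b := by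
          refine le_trans (natDegree_C_mul_le _ _) (le_trans natDegree_pow_le ?_)
          rw [hgKdeg]
        have hd2 : (C LK * g2^a).natDegree ≤ a*b := by
          refine le_trans (natDegree_C_mul_le _ _) (le_trans natDegree_pow_le ?_)
          rw [hg2deg]
        rw [coeff_eq_zero_of_natDegree_lt (by omega), coeff_eq_zero_of_natDegree_lt (by omega)]
    obtain ⟨e, hge⟩ := approx_unique (by omega : 1 ≤ a) hLK haK hgKmon hgKdeg hg2mon hg2deg hpair
    set u3 : K[X] := u2.comp (X + C e) with hu3def
    have hcomp3 : fK = u3.comp gK := by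
      rw [hu3def, comp_assoc, add_comp, X_comp, C_comp, ← hge]
      exact hcomp2
    have hu3deg : u3.natDegree ≤ a := by
      rw [hu3def, natDegree_comp, natDegree_X_add_C, mul_one, hu2deg]
    have hFrecK : Frec a b gK fK (a+1) = 0 :=
      Frec_comp_eq_zero hgKmon hgKdeg (by omega : 1 ≤ b) hu3deg hcomp3
    have hfKrel : ((f.scaleRoots sZ).map φ).comp (C c * X) = C (c^(a*b)) * fK := by
      have h1 := scaleRoots_comp_rel φ sZ f (a*b) hfd
      rw [show φ sZ = c from by rw [hφdef, eq_intCast, hcdef]] at h1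
      exact h1
    have hscaleK := Frec_scale a b φ c G (f.scaleRoots sZ) gK fK hgKrel hfKrel (a+1)
    rw [hFrecK, mul_zero] at hscaleK
    have hcoeffm := congrArg (fun P : K[X] => P.coeff m) hscaleK
    simp only [coeff_comp_C_mul_X, coeff_map, eq_intCast, coeff_zero, hφdef] at hcoeffm
    have hNc : ((N : ℤ) : K) * c^m = 0 := by
      rw [hNdef]
      exact hcoeffm
    rcases mul_eq_zero.mp hNc with h | h
    · exact h
    · exact absurd h (pow_ne_zero m hc0)


end RedIndec

theorem reduction_mod_p_indecomposable (d : ℕ) (hd : 2 ≤ d) :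
    ∃ γ : ℝ, 0 < γ ∧
      ∀ f : Polynomial ℤ, f.natDegree = d →
        IndecomposablePoly (f.map (Int.castRingHom ℚ)) →
        ∀ (p : ℕ) [Fact p.Prime],
          γ * (intMaxNorm f : ℝ) ^ d < (p : ℝ) →
          IndecomposablePoly
            (f.map (Int.castRingHom (AlgebraicClosure (ZMod p)))) := by
  classical
  have hkey : ∀ a b : ℕ, ∃ C : ℚ, 1 ≤ C ∧ (2 ≤ a → 2 ≤ b →
      ∀ f : ℤ[X], f.natDegree = a * b →
      IndecomposablePoly (f.map (Int.castRingHom ℚ)) →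
      ∃ N : ℤ, N ≠ 0 ∧ |(N : ℚ)| ≤ C * (intMaxNorm f : ℚ) ^ (a * b) ∧
        ∀ (K : Type) [inst : Field K], (a : K) ≠ 0 → ((f.coeff (a * b) : ℤ) : K) ≠ 0 →
          ∀ u g1 : K[X], u.natDegree = a → g1.natDegree = b →
            f.map (Int.castRingHom K) = u.comp g1 → ((N : ℤ) : K) = 0) := by
    intro a b
    by_cases h : 2 ≤ a ∧ 2 ≤ b
    · obtain ⟨C, hC1, hC⟩ := RedIndec.key a b h.1 h.2
      exact ⟨C, hC1, fun _ _ => hC⟩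
    · exact ⟨1, le_rfl, fun h1 h2 => absurd ⟨h1, h2⟩ h⟩
  choose Cf hCf1 hCf2 using hkey
  set S : ℝ := ∑ x ∈ Finset.range (d+1), ∑ y ∈ Finset.range (d+1), ((Cf x y : ℚ) : ℝ) with hSdef
  have hterm_nonneg : ∀ x y : ℕ, (0:ℝ) ≤ ((Cf x y : ℚ) : ℝ) := by
    intro x y
    have := hCf1 x y
    have h1 : (1:ℝ) ≤ ((Cf x y : ℚ) : ℝ) := by exact_mod_cast this
    linarith
  have hS_nonneg : 0 ≤ S := by
    rw [hSdef]
    refine Finset.sum_nonneg fun x _ => Finset.sum_nonneg fun y _ => hterm_nonneg x y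
  have hS_ge : ∀ x y : ℕ, x ≤ d → y ≤ d → ((Cf x y : ℚ) : ℝ) ≤ S := by
    intro x y hx hy
    rw [hSdef]
    calc ((Cf x y : ℚ) : ℝ) ≤ ∑ y' ∈ Finset.range (d+1), ((Cf x y' : ℚ) : ℝ) := by
          refine Finset.single_le_sum (fun i _ => hterm_nonneg x i) ?_
          exact Finset.mem_range.mpr (by omega)
      _ ≤ ∑ x' ∈ Finset.range (d+1), ∑ y' ∈ Finset.range (d+1), ((Cf x' y' : ℚ) : ℝ) := by
          refine Finset.single_le_sum
            (f := fun x' => ∑ y' ∈ Finset.range (d+1), ((Cf x' y' : ℚ) : ℝ))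
            (fun i _ => Finset.sum_nonneg fun y' _ => hterm_nonneg i y') ?_
          exact Finset.mem_range.mpr (by omega)
  refine ⟨(d:ℝ) + 1 + S, by positivity, ?_⟩
  intro f hfd hindec p hFp hple
  set K : Type := AlgebraicClosure (ZMod p) with hKdef
  have hppos : 0 < p := hFp.out.pos
  -- basic facts
  have hf0 : f ≠ 0 := fun h => by rw [h] at hfd; simp at hfd; omega
  have hL0 : f.coeff d ≠ 0 := by
    have := leadingCoeff_ne_zero.mpr hf0
    rwa [leadingCoeff, hfd] at this
  have hμ1 : 1 ≤ intMaxNorm f := by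
    have hmem : d ∈ f.support := Polynomial.mem_support_iff.mpr hL0
    have h1 : (f.coeff d).natAbs ≤ intMaxNorm f :=
      Finset.le_sup (f := fun i => (f.coeff i).natAbs) hmem
    omega
  have hμR : (1:ℝ) ≤ (intMaxNorm f : ℝ) := by exact_mod_cast hμ1
  have hμpow : (1:ℝ) ≤ (intMaxNorm f : ℝ) ^ d := one_le_pow₀ hμR
  have hγμ : ((d:ℝ) + 1) ≤ ((d:ℝ) + 1 + S) * (intMaxNorm f : ℝ) ^ d := by
    have h1 : ((d:ℝ) + 1) ≤ ((d:ℝ) + 1 + S) := by linarith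
    have h2 : ((d:ℝ) + 1 + S) * 1 ≤ ((d:ℝ) + 1 + S) * (intMaxNorm f : ℝ) ^ d := by
      refine mul_le_mul_of_nonneg_left hμpow (by positivity)
    linarith
  have hdp : d < p := by
    have : ((d:ℝ)) + 1 < (p:ℝ) := lt_of_le_of_lt hγμ hple
    exact_mod_cast (by linarith : (d:ℝ) < (p:ℝ))
  have hμp : (intMaxNorm f : ℝ) < (p:ℝ) := by
    have h1 : (intMaxNorm f : ℝ) ≤ (intMaxNorm f : ℝ)^d := le_self_pow₀ hμR (by omega)
    have h2 : (intMaxNorm f : ℝ)^d ≤ ((d:ℝ) + 1 + S) * (intMaxNorm f : ℝ)^d := by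
      have h5 : (1:ℝ) ≤ (d:ℝ) + 1 + S := by
        have h6 : (0:ℝ) ≤ (d:ℝ) := Nat.cast_nonneg d
        linarith
      nlinarith
    linarith
  have hμp' : intMaxNorm f < p := by exact_mod_cast hμp
  have hcast : ∀ z : ℤ, ((z:ℤ):K) = 0 → (p:ℤ) ∣ z := by
    intro z hz
    have h1 : algebraMap (ZMod p) K ((z : ZMod p)) = ((z:ℤ):K) := map_intCast _ z
    rw [hz] at h1
    have h2 : ((z : ZMod p)) = (0 : ZMod p) := by
      refine (algebraMap (ZMod p) K).injective ?_
      rw [h1, map_zero]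
    exact (ZMod.intCast_zmod_eq_zero_iff_dvd z p).mp h2
  have hLK : ((f.coeff d : ℤ) : K) ≠ 0 := by
    intro hz
    have hdvd := hcast _ hz
    have h1 : (f.coeff d).natAbs ≤ intMaxNorm f :=
      Finset.le_sup (f := fun i => (f.coeff i).natAbs) (Polynomial.mem_support_iff.mpr hL0)
    have h2 : p ≤ (f.coeff d).natAbs := by
      have := Int.natAbs_dvd_natAbs.mpr hdvd
      simp only [Int.natAbs_natCast] at this
      exact Nat.le_of_dvd (by omega) this
    omega
  have hfKdeg : (f.map (Int.castRingHom K)).natDegree = d := by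
    refine le_antisymm (le_trans natDegree_map_le (le_of_eq hfd)) ?_
    refine le_natDegree_of_ne_zero ?_
    rw [coeff_map, eq_intCast]
    exact hLK
  constructor
  · rw [hfKdeg]; omega
  · rintro ⟨u, g1, hu2, hg2, heq⟩
    have hab : u.natDegree * g1.natDegree = d := by
      rw [← hfKdeg, heq, natDegree_comp]
    set a := u.natDegree with hadef
    set b := g1.natDegree with hbdef
    have hale : a ≤ d := by
      calc a = a * 1 := (Nat.mul_one a).symm
        _ ≤ a * b := Nat.mul_le_mul_left a (by omega)
        _ = d := hab
    have hble : b ≤ d := by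
      calc b = 1 * b := (Nat.one_mul b).symm
        _ ≤ a * b := Nat.mul_le_mul_right b (by omega)
        _ = d := hab
    obtain ⟨N, hN0, hNb, hNK⟩ := hCf2 a b hu2 hg2 f (by rw [hfd, ← hab]) hindec
    have haK : (a : K) ≠ 0 := by
      intro h0
      have := (CharP.cast_eq_zero_iff K p a).mp h0
      have : p ≤ a := Nat.le_of_dvd (by omega) this
      omega
    have hLKab : ((f.coeff (a*b) : ℤ) : K) ≠ 0 := by rw [hab]; exact hLK
    have hNK0 := hNK K haK hLKab u g1 rfl rfl heq
    have hdvd : (p:ℤ) ∣ N := hcast N hNK0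
    have hpleN : (p:ℤ) ≤ |N| := Int.le_of_dvd (abs_pos.mpr hN0) ((dvd_abs _ _).mpr hdvd)
    -- bound
    have hNR : |((N:ℤ):ℝ)| ≤ ((Cf a b : ℚ):ℝ) * (intMaxNorm f : ℝ)^d := by
      have h1 : ((|(N:ℚ)| : ℚ) : ℝ) ≤ ((Cf a b * (intMaxNorm f : ℚ) ^ (a*b) : ℚ) : ℝ) := by
        exact_mod_cast hNb
      rw [hab] at h1
      push_cast at h1
      exact h1
    have hcontr : (p:ℝ) ≤ ((Cf a b : ℚ):ℝ) * (intMaxNorm f : ℝ)^d := by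
      refine le_trans ?_ hNR
      have : ((p:ℤ):ℝ) ≤ ((|N| : ℤ):ℝ) := by exact_mod_cast hpleN
      push_cast at this
      exact this
    have hfinal : ((Cf a b : ℚ):ℝ) * (intMaxNorm f : ℝ)^d < (p:ℝ) := by
      have h1 : ((Cf a b : ℚ):ℝ) ≤ S := hS_ge a b hale hble
      have h2 : ((Cf a b : ℚ):ℝ) * (intMaxNorm f : ℝ)^d ≤ S * (intMaxNorm f : ℝ)^d := by
        refine mul_le_mul_of_nonneg_right h1 (by positivity)
      have h3 : S * (intMaxNorm f : ℝ)^d < ((d:ℝ) + 1 + S) * (intMaxNorm f : ℝ)^d := by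
        have h4 : (0:ℝ) < ((d:ℝ) + 1) * (intMaxNorm f : ℝ)^d := by positivity
        nlinarith
      linarith
    linarith
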